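/- Under the hypotheses ρ > 0, p > 0, q²/p + p²/ρ ≤ r ≤ 13q²/(3p) + 33p²/(13ρ), the cubic P(α) = 13p³α³ − 6p³α² + αp(5rρ − 12p²) − 5ρq² satisfies P(3/13) ≤ 0, P(1) ≥ 0, and P''(α) > 0 for all α > 2/13. -/

import Mathlib

/-- sign and convexity facts for the bi-B-spline realizability cubic
`P(α) = 13p³α³ − 6p³α² + αp(5rρ − 12p²) − 5ρq²`. -/
theorem stmt_13 (ρ p q r : ℝ) (hρ : 0 < ρ) (hp : 0 < p)
    (hr₁ : q^2/p + p^2/ρ ≤ r) (hr₂ : r ≤ 13*q^2/(3*p) + 33*p^2/(13*ρ))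
    (P : ℝ → ℝ)
    (hP : ∀ α, P α = 13*p^3*α^3 - 6*p^3*α^2 + α*p*(5*r*ρ - 12*p^2) - 5*ρ*q^2) :
    P (3/13) ≤ 0 ∧ 0 ≤ P 1 ∧ ∀ α : ℝ, 2/13 < α → 0 < deriv (deriv P) α := by
  have hPf : P = fun α => 13*p^3*α^3 - 6*p^3*α^2 + α*p*(5*r*ρ - 12*p^2) - 5*ρ*q^2 :=
    funext hP
  subst hPf
  have hr₁' : q^2*ρ + p^3 ≤ r*ρ*p := by
    have h := hr₁
    rw [div_add_div _ _ hp.ne' hρ.ne', div_le_iff₀ (mul_pos hp hρ)] at h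
    nlinarith [h]
  have hr₂' : r*ρ*p ≤ 13*q^2*ρ/3 + 33*p^3/13 := by
    have h := mul_le_mul_of_nonneg_left hr₂ (le_of_lt (mul_pos hρ hp))
    rw [mul_add] at h
    have e1 : ρ*p*(13*q^2/(3*p)) = 13*q^2*ρ/3 := by field_simp
    have e2 : ρ*p*(33*p^2/(13*ρ)) = 33*p^3/13 := by field_simp
    rw [e1, e2] at h
    linarith [h]
  have hd1 : (deriv fun α : ℝ => 13*p^3*α^3 - 6*p^3*α^2 + α*p*(5*r*ρ - 12*p^2) - 5*ρ*q^2)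
      = fun α : ℝ => 39*p^3*α^2 - 12*p^3*α + p*(5*r*ρ - 12*p^2) := by
    funext α
    have h1 : HasDerivAt (fun α : ℝ => 13*p^3*α^3 - 6*p^3*α^2 + α*p*(5*r*ρ - 12*p^2) - 5*ρ*q^2)
        (39*p^3*α^2 - 12*p^3*α + p*(5*r*ρ - 12*p^2)) α := by
      have h3 := (hasDerivAt_pow 3 α).const_mul (13*p^3)
      have h2 := (hasDerivAt_pow 2 α).const_mul (6*p^3)
      have hl := (hasDerivAt_id α).mul_const (p*(5*r*ρ - 12*p^2))
      have := ((h3.sub h2).add hl).sub_const (5*ρ*q^2)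
      convert this using 1
      all_goals first
        | (funext x; simp only [id, Pi.add_apply, Pi.sub_apply]; ring)
        | (push_cast; ring)
        | rfl
    exact h1.deriv
  have hd2 : ∀ α : ℝ, deriv (fun α : ℝ => 39*p^3*α^2 - 12*p^3*α + p*(5*r*ρ - 12*p^2)) α
      = 78*p^3*α - 12*p^3 := by
    intro α
    have h1 : HasDerivAt (fun α : ℝ => 39*p^3*α^2 - 12*p^3*α + p*(5*r*ρ - 12*p^2))
        (78*p^3*α - 12*p^3) α := by
      have h2 := (hasDerivAt_pow 2 α).const_mul (39*p^3)
      have hl := (hasDerivAt_id α).const_mul (12*p^3)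
      have := (h2.sub hl).add_const (p*(5*r*ρ - 12*p^2))
      convert this using 1
      all_goals first
        | rfl
        | (funext x; simp only [id, Pi.add_apply, Pi.sub_apply]; ring)
        | (push_cast; ring)
    exact h1.deriv
  refine ⟨?_, ?_, ?_⟩
  · simp only
    nlinarith [hr₂', hp.le, hρ.le]
  · simp only
    nlinarith [hr₁']
  · intro α hα
    rw [hd1, hd2]
    nlinarith [pow_pos hp 3]
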